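/- Fix a real number y with 0 < y < 1, a real number x₀, and x, z ∈ ℂ with e^x ≠ 1. Then the function τ ↦ e^{−yx}·F(x, z − x₀ − yτ, τ) tends to 2πi·e^{−yx}·(1/(e^x − 1) + 1) as Im τ → ∞. -/

import Mathlib

open Complex Filter

/-- The Jacobi theta function `θ(z|τ) = ∑_{n∈ℤ} (−1)^n e^{iπτ(n+1/2)²} e^{z(n+1/2)}`. -/
noncomputable def jTheta (z : ℂ) (τ : UpperHalfPlane) : ℂ :=
  ∑' n : ℤ, (-1 : ℂ) ^ n * Complex.exp (Real.pi * I * (τ : ℂ) * ((n : ℂ) + 1/2) ^ 2)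
    * Complex.exp (z * ((n : ℂ) + 1/2))

/-- The Jacobi form `F(x,z,τ) = 2πi θ'(0|τ) θ(x+2πiz|τ)/(θ(x|τ) θ(2πiz|τ))`. -/
noncomputable def jacobiF (x z : ℂ) (τ : UpperHalfPlane) : ℂ :=
  2 * Real.pi * I * deriv (fun w => jTheta w τ) 0 * jTheta (x + 2 * Real.pi * I * z) τ /
    (jTheta x τ * jTheta (2 * Real.pi * I * z) τ)


local notation "π" => Real.pi

lemma summable_bound_aux (σ : ℝ) (k : ℕ) :
    Summable fun n : ℤ => (|(n : ℝ)| ^ k) *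
      Real.exp (σ * |(n : ℝ)| - π * ((n : ℝ) ^ 2 - |(n : ℝ)|)) := by
  have h := summable_pow_mul_jacobiTheta₂_term_bound ((σ + π) / (2 * π)) one_pos k
  refine h.congr fun n => ?_
  have hπ : (π : ℝ) ≠ 0 := Real.pi_ne_zero
  rw [Int.cast_abs]
  congr 1
  rw [Real.exp_eq_exp]
  field_simp
  ring

lemma tendsto_tsum_exp (c : ℤ → ℂ) (a : ℤ → ℝ) (h0 : ∀ n, 0 ≤ a n)
    (hsum : Summable fun n => ‖c n‖ * Real.exp (-π * a n)) :
    Tendsto (fun τ : UpperHalfPlane =>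
        ∑' n : ℤ, c n * Complex.exp ((π : ℂ) * I * (a n : ℂ) * (τ : ℂ)))
      UpperHalfPlane.atImInfty
      (nhds (∑' n : ℤ, if a n = 0 then c n else 0)) := by
  have him : Tendsto (fun τ : UpperHalfPlane => (τ : ℂ).im) UpperHalfPlane.atImInfty atTop :=
    tendsto_comap
  have hnorm : ∀ (n : ℤ) (τ : UpperHalfPlane),
      ‖c n * Complex.exp ((π : ℂ) * I * (a n : ℂ) * (τ : ℂ))‖
        = ‖c n‖ * Real.exp (-(π * a n) * (τ : ℂ).im) := by
    intro n τ
    rw [norm_mul]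
    congr 1
    rw [Complex.norm_exp]
    congr 1
    rw [show (π : ℂ) * I * (a n : ℂ) * (τ : ℂ) = (((π * a n : ℝ)) : ℂ) * (τ : ℂ) * I by
      push_cast; ring, mul_I_re]
    simp [Complex.ofReal_mul, neg_mul]
  refine tendsto_tsum_of_dominated_convergence hsum (fun n => ?_) ?_
  · rcases eq_or_lt_of_le (h0 n) with h | h
    · simp only [← h, if_pos rfl, Complex.ofReal_zero, mul_zero, zero_mul, Complex.exp_zero,
        mul_one]
      exact tendsto_const_nhds
    · rw [if_neg h.ne']
      rw [tendsto_zero_iff_norm_tendsto_zero]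
      simp only [hnorm]
      have h1 : Tendsto (fun t : ℝ => -(π * a n) * t) atTop atBot :=
        tendsto_id.const_mul_atTop_of_neg (by nlinarith [Real.pi_pos])
      have h2 : Tendsto (fun τ : UpperHalfPlane => Real.exp (-(π * a n) * (τ : ℂ).im))
          UpperHalfPlane.atImInfty (nhds 0) :=
        Real.tendsto_exp_atBot.comp (h1.comp him)
      simpa using tendsto_const_nhds.mul h2
  · have hev : ∀ᶠ τ : UpperHalfPlane in UpperHalfPlane.atImInfty, 1 ≤ (τ : ℂ).im := by
      rw [Filter.eventually_iff, UpperHalfPlane.atImInfty_mem]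
      exact ⟨1, fun z hz => hz⟩
    filter_upwards [hev] with τ h1 n
    rw [hnorm]
    have : -(π * a n) * (τ : ℂ).im ≤ -π * a n := by
      have h2 := mul_nonneg (mul_nonneg Real.pi_pos.le (h0 n)) (sub_nonneg.mpr h1)
      nlinarith
    exact mul_le_mul_of_nonneg_left (Real.exp_le_exp.mpr this) (norm_nonneg _)

lemma twoPiI_ne : (2 * (π : ℂ) * I) ≠ 0 := by
  simp [Real.pi_ne_zero, I_ne_zero]

lemma neg_one_zpow (n : ℤ) : ((-1 : ℂ)) ^ n = Complex.exp ((n : ℂ) * ((π : ℂ) * I)) := by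
  rw [Complex.exp_int_mul, Complex.exp_pi_mul_I]

lemma jTheta_eq (w : ℂ) (τ : UpperHalfPlane) :
    jTheta w τ = Complex.exp ((π : ℂ) * I * τ / 4 + w / 2) *
      jacobiTheta₂ (w / (2 * (π : ℂ) * I) + (1 + (τ : ℂ)) / 2) τ := by
  rw [jTheta, jacobiTheta₂, ← tsum_mul_left]
  refine tsum_congr fun n => ?_
  rw [jacobiTheta₂_term, neg_one_zpow, ← Complex.exp_add, ← Complex.exp_add, ← Complex.exp_add]
  congr 1
  have h := twoPiI_ne
  field_simp
  ring

lemma deriv_jTheta (τ : UpperHalfPlane) :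
    deriv (fun w => jTheta w τ) 0 = Complex.exp ((π : ℂ) * I * τ / 4) *
      ((1 / 2) * jacobiTheta₂ ((1 + (τ : ℂ)) / 2) τ +
        (1 / (2 * (π : ℂ) * I)) * jacobiTheta₂' ((1 + (τ : ℂ)) / 2) τ) := by
  have hτ : 0 < ((τ : ℂ)).im := τ.2
  have hfun : (fun w => jTheta w τ) = fun w => Complex.exp ((π : ℂ) * I * τ / 4 + w / 2) *
      jacobiTheta₂ (w / (2 * (π : ℂ) * I) + (1 + (τ : ℂ)) / 2) τ :=
    funext fun w => jTheta_eq w τ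
  rw [hfun]
  have h1 : HasDerivAt (fun w : ℂ => Complex.exp ((π : ℂ) * I * τ / 4 + w / 2))
      (Complex.exp ((π : ℂ) * I * τ / 4 + (0 : ℂ) / 2) * (1 / 2)) 0 := by
    have : HasDerivAt (fun w : ℂ => (π : ℂ) * I * τ / 4 + w / 2) (1 / 2) 0 := by
      simpa using ((hasDerivAt_id (0 : ℂ)).div_const 2).const_add ((π : ℂ) * I * τ / 4)
    simpa using this.cexp
  have h2 : HasDerivAt (fun w : ℂ => jacobiTheta₂ (w / (2 * (π : ℂ) * I) + (1 + (τ : ℂ)) / 2) τ)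
      (jacobiTheta₂' ((0 : ℂ) / (2 * (π : ℂ) * I) + (1 + (τ : ℂ)) / 2) τ * (1 / (2 * (π : ℂ) * I)))
      0 := by
    have hin : HasDerivAt (fun w : ℂ => w / (2 * (π : ℂ) * I) + (1 + (τ : ℂ)) / 2)
        (1 / (2 * (π : ℂ) * I)) 0 := by
      simpa using ((hasDerivAt_id (0 : ℂ)).div_const (2 * (π : ℂ) * I)).add_const
        ((1 + (τ : ℂ)) / 2)
    exact (hasDerivAt_jacobiTheta₂_fst _ hτ).comp 0 hin
  have := (h1.mul h2).deriv
  erw [this]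
  simp only [zero_div, add_zero, zero_add]
  ring

lemma abs_int_facts (n : ℤ) : |(n : ℝ)| ≤ (n : ℝ) ^ 2 := by
  rcases eq_or_ne n 0 with rfl | hn
  · simp
  · have h1 : (1 : ℝ) ≤ |(n : ℝ)| := by
      rw [← Int.cast_abs]
      exact_mod_cast Int.one_le_abs hn
    nlinarith [_root_.sq_abs (n : ℝ), abs_nonneg (n : ℝ)]

lemma quad_lb (b : ℝ) (hb : |b| ≤ 1) (n : ℤ) :
    (n : ℝ) ^ 2 - |(n : ℝ)| ≤ (n : ℝ) ^ 2 + b * n := by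
  have h1 : |b * (n : ℝ)| ≤ |(n : ℝ)| := by
    rw [abs_mul]
    nlinarith [abs_nonneg (n : ℝ)]
  nlinarith [neg_abs_le (b * (n : ℝ))]

lemma quad_nonneg (b : ℝ) (hb : |b| ≤ 1) (n : ℤ) : 0 ≤ (n : ℝ) ^ 2 + b * n := by
  have := quad_lb b hb n
  have := abs_int_facts n
  linarith

lemma summable_main {K σ : ℝ} {k : ℕ} (c : ℤ → ℂ) (a : ℤ → ℝ)
    (hc : ∀ n, ‖c n‖ ≤ K * |(n : ℝ)| ^ k * Real.exp (σ * |(n : ℝ)|))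
    (ha : ∀ n : ℤ, (n : ℝ) ^ 2 - |(n : ℝ)| ≤ a n) :
    Summable fun n => ‖c n‖ * Real.exp (-π * a n) := by
  refine Summable.of_nonneg_of_le (fun n => by positivity) (fun n => ?_)
    (((summable_bound_aux σ k).mul_left K))
  have h1 : Real.exp (-π * a n) ≤ Real.exp (-π * ((n : ℝ) ^ 2 - |(n : ℝ)|)) := by
    apply Real.exp_le_exp.mpr
    nlinarith [Real.pi_pos, ha n]
  calc ‖c n‖ * Real.exp (-π * a n)
      ≤ (K * |(n : ℝ)| ^ k * Real.exp (σ * |(n : ℝ)|)) *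
        Real.exp (-π * ((n : ℝ) ^ 2 - |(n : ℝ)|)) := by
        apply mul_le_mul (hc n) h1 (Real.exp_pos _).le
        calc (0:ℝ) ≤ ‖c n‖ := norm_nonneg _
          _ ≤ _ := hc n
    _ = K * (|(n : ℝ)| ^ k * Real.exp (σ * |(n : ℝ)| - π * ((n : ℝ) ^ 2 - |(n : ℝ)|))) := by
        rw [show σ * |(n : ℝ)| - π * ((n : ℝ) ^ 2 - |(n : ℝ)|)
            = σ * |(n : ℝ)| + -π * ((n : ℝ) ^ 2 - |(n : ℝ)|) by ring, Real.exp_add]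
        ring


lemma hsupp01 (c : ℤ → ℂ) (n : ℤ) (hn : n ∉ ({0, -1} : Finset ℤ)) :
    (if (n : ℝ) ^ 2 + 1 * n = 0 then c n else 0) = 0 := by
  rw [if_neg]
  intro h
  have h3 : (n * (n + 1) : ℤ) = 0 := by
    have : ((n * (n + 1) : ℤ) : ℝ) = 0 := by push_cast; linear_combination h
    exact_mod_cast this
  simp only [Finset.mem_insert, Finset.mem_singleton] at hn
  rcases mul_eq_zero.mp h3 with h4 | h4 <;> omega

lemma tendsto_T1 :
    Tendsto (fun τ : UpperHalfPlane => jacobiTheta₂ ((1 + (τ : ℂ)) / 2) τ)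
      UpperHalfPlane.atImInfty (nhds 0) := by
  have hsum := summable_main (K := 1) (k := 0) (σ := 0) (fun n => (-1 : ℂ) ^ n)
    (fun n => (n : ℝ) ^ 2 + 1 * n) (fun n => by simp) (quad_lb 1 (by norm_num))
  have key := tendsto_tsum_exp (fun n => (-1 : ℂ) ^ n) (fun n => (n : ℝ) ^ 2 + 1 * n)
    (quad_nonneg 1 (by norm_num)) hsum
  have hval : (∑' n : ℤ, if (n : ℝ) ^ 2 + 1 * n = 0 then ((-1 : ℂ) ^ n) else 0) = 0 := by
    rw [tsum_eq_sum (s := ({0, -1} : Finset ℤ)) (hsupp01 _)]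
    norm_num
  rw [hval] at key
  refine key.congr fun τ => ?_
  rw [jacobiTheta₂]
  refine tsum_congr fun n => ?_
  simp only [jacobiTheta₂_term, neg_one_zpow, ← Complex.exp_add]
  congr 1
  push_cast
  ring

lemma tendsto_T2 :
    Tendsto (fun τ : UpperHalfPlane => jacobiTheta₂' ((1 + (τ : ℂ)) / 2) τ)
      UpperHalfPlane.atImInfty (nhds (2 * (π : ℂ) * I)) := by
  have hc : ∀ n : ℤ, ‖2 * (π : ℂ) * I * (n : ℂ) * (-1 : ℂ) ^ n‖
      ≤ (2 * π) * |(n : ℝ)| ^ 1 * Real.exp (0 * |(n : ℝ)|) := by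
    intro n
    simp [Complex.norm_intCast, abs_of_pos Real.pi_pos]
  have hsum := summable_main (K := 2 * π) (k := 1) (σ := 0)
    (fun n => 2 * (π : ℂ) * I * (n : ℂ) * (-1 : ℂ) ^ n)
    (fun n => (n : ℝ) ^ 2 + 1 * n) hc (quad_lb 1 (by norm_num))
  have key := tendsto_tsum_exp _ _ (quad_nonneg 1 (by norm_num)) hsum
  have hval : (∑' n : ℤ, if (n : ℝ) ^ 2 + 1 * n = 0
      then (2 * (π : ℂ) * I * (n : ℂ) * (-1 : ℂ) ^ n) else 0) = 2 * (π : ℂ) * I := by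
    rw [tsum_eq_sum (s := ({0, -1} : Finset ℤ)) (hsupp01 _)]
    norm_num
  rw [hval] at key
  refine key.congr fun τ => ?_
  rw [jacobiTheta₂']
  refine tsum_congr fun n => ?_
  simp only [jacobiTheta₂'_term, jacobiTheta₂_term, neg_one_zpow, ← Complex.exp_add]
  have hexp : ((n : ℂ)) * ((π : ℂ) * I) + (π : ℂ) * I * ((((n : ℝ) ^ 2 + 1 * n : ℝ)) : ℂ) * (τ : ℂ)
      = 2 * (π : ℂ) * I * (n : ℂ) * ((1 + (τ : ℂ)) / 2) + (π : ℂ) * I * (n : ℂ) ^ 2 * (τ : ℂ) := by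
    push_cast
    ring
  rw [mul_assoc, ← Complex.exp_add, hexp]

lemma tendstoA :
    Tendsto (fun τ : UpperHalfPlane =>
        Complex.exp (-((π : ℂ) * I * τ / 4)) * deriv (fun w => jTheta w τ) 0)
      UpperHalfPlane.atImInfty (nhds 1) := by
  have heq : ∀ τ : UpperHalfPlane,
      Complex.exp (-((π : ℂ) * I * τ / 4)) * deriv (fun w => jTheta w τ) 0
        = (1 / 2) * jacobiTheta₂ ((1 + (τ : ℂ)) / 2) τ
          + (1 / (2 * (π : ℂ) * I)) * jacobiTheta₂' ((1 + (τ : ℂ)) / 2) τ := by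
    intro τ
    rw [deriv_jTheta, ← mul_assoc, ← Complex.exp_add, neg_add_cancel, Complex.exp_zero, one_mul]
  have k1 : Tendsto (fun τ : UpperHalfPlane => (1 / 2 : ℂ) * jacobiTheta₂ ((1 + (τ : ℂ)) / 2) τ)
      UpperHalfPlane.atImInfty (nhds ((1 / 2 : ℂ) * 0)) := tendsto_const_nhds.mul tendsto_T1
  have k2 : Tendsto (fun τ : UpperHalfPlane =>
      (1 / (2 * (π : ℂ) * I)) * jacobiTheta₂' ((1 + (τ : ℂ)) / 2) τ)
      UpperHalfPlane.atImInfty (nhds ((1 / (2 * (π : ℂ) * I)) * (2 * (π : ℂ) * I))) :=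
    tendsto_const_nhds.mul tendsto_T2
  have key := k1.add k2
  have : (1 / 2 : ℂ) * 0 + (1 / (2 * (π : ℂ) * I)) * (2 * (π : ℂ) * I) = 1 := by
    rw [mul_zero, zero_add, one_div, inv_mul_cancel₀ twoPiI_ne]
  rw [this] at key
  exact key.congr fun τ => (heq τ).symm

lemma tendstoB (x : ℂ) :
    Tendsto (fun τ : UpperHalfPlane =>
        Complex.exp (-((π : ℂ) * I * τ / 4)) * jTheta x τ)
      UpperHalfPlane.atImInfty (nhds (Complex.exp (x / 2) - Complex.exp (-x / 2))) := by
  have hc : ∀ n : ℤ, ‖(-1 : ℂ) ^ n * Complex.exp (x * ((n : ℂ) + 1 / 2))‖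
      ≤ Real.exp (|x.re| / 2) * |(n : ℝ)| ^ 0 * Real.exp (|x.re| * |(n : ℝ)|) := by
    intro n
    have h1 : ‖(-1 : ℂ) ^ n * Complex.exp (x * ((n : ℂ) + 1 / 2))‖
        = Real.exp (x.re * ((n : ℝ) + 1 / 2)) := by
      rw [norm_mul]
      simp [Complex.norm_exp, Complex.mul_re,
        show ((n : ℂ) + 1 / 2).re = (n : ℝ) + 1 / 2 by simp,
        show ((n : ℂ) + 1 / 2).im = 0 by simp]
    rw [h1, pow_zero, mul_one, ← Real.exp_add, Real.exp_le_exp]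
    nlinarith [le_abs_self (x.re * (n : ℝ)), abs_mul x.re (n : ℝ), le_abs_self x.re,
      abs_nonneg (n : ℝ), abs_nonneg x.re]
  have hsum := summable_main (K := Real.exp (|x.re| / 2)) (k := 0) (σ := |x.re|)
    (fun n => (-1 : ℂ) ^ n * Complex.exp (x * ((n : ℂ) + 1 / 2)))
    (fun n => (n : ℝ) ^ 2 + 1 * n) hc (quad_lb 1 (by norm_num))
  have key := tendsto_tsum_exp _ _ (quad_nonneg 1 (by norm_num)) hsum
  have hval : (∑' n : ℤ, if (n : ℝ) ^ 2 + 1 * n = 0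
      then ((-1 : ℂ) ^ n * Complex.exp (x * ((n : ℂ) + 1 / 2))) else 0)
      = Complex.exp (x / 2) - Complex.exp (-x / 2) := by
    rw [tsum_eq_sum (s := ({0, -1} : Finset ℤ)) (hsupp01 _)]
    norm_num
    ring_nf
  rw [hval] at key
  refine key.congr fun τ => ?_
  rw [jTheta, ← tsum_mul_left]
  refine tsum_congr fun n => ?_
  simp only [neg_one_zpow]
  rw [show Complex.exp ((n : ℂ) * ((π : ℂ) * I)) * Complex.exp ((π : ℂ) * I * τ * ((n : ℂ) + 1 / 2) ^ 2)
        * Complex.exp (x * ((n : ℂ) + 1 / 2))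
      = Complex.exp ((n : ℂ) * ((π : ℂ) * I) + (π : ℂ) * I * τ * ((n : ℂ) + 1 / 2) ^ 2
        + x * ((n : ℂ) + 1 / 2)) by rw [Complex.exp_add, Complex.exp_add]]
  rw [show (Complex.exp ((n : ℂ) * ((π : ℂ) * I)) * Complex.exp (x * ((n : ℂ) + 1 / 2)))
        * Complex.exp ((π : ℂ) * I * (((((n : ℝ)) ^ 2 + 1 * n : ℝ)) : ℂ) * (τ : ℂ))
      = Complex.exp ((n : ℂ) * ((π : ℂ) * I) + x * ((n : ℂ) + 1 / 2)
        + (π : ℂ) * I * (((((n : ℝ)) ^ 2 + 1 * n : ℝ)) : ℂ) * (τ : ℂ)) by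
      rw [Complex.exp_add, Complex.exp_add]]
  rw [← Complex.exp_add]
  congr 1
  push_cast
  ring

lemma tendstoD (y : ℝ) (hy0 : 0 < y) (hy1 : y < 1) (w : ℂ) :
    Tendsto (fun τ : UpperHalfPlane =>
        Complex.exp (-((π : ℂ) * I * (1 / 4 - (y : ℂ)) * τ)) *
          jTheta (w - 2 * (π : ℂ) * I * (y : ℂ) * τ) τ)
      UpperHalfPlane.atImInfty (nhds (Complex.exp (w / 2))) := by
  have hb : |1 - 2 * y| ≤ 1 := by rw [abs_le]; constructor <;> linarith
  have hc : ∀ n : ℤ, ‖(-1 : ℂ) ^ n * Complex.exp (w * ((n : ℂ) + 1 / 2))‖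
      ≤ Real.exp (|w.re| / 2) * |(n : ℝ)| ^ 0 * Real.exp (|w.re| * |(n : ℝ)|) := by
    intro n
    have h1 : ‖(-1 : ℂ) ^ n * Complex.exp (w * ((n : ℂ) + 1 / 2))‖
        = Real.exp (w.re * ((n : ℝ) + 1 / 2)) := by
      rw [norm_mul]
      simp [Complex.norm_exp, Complex.mul_re,
        show ((n : ℂ) + 1 / 2).re = (n : ℝ) + 1 / 2 by simp,
        show ((n : ℂ) + 1 / 2).im = 0 by simp]
    rw [h1, pow_zero, mul_one, ← Real.exp_add, Real.exp_le_exp]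
    nlinarith [le_abs_self (w.re * (n : ℝ)), abs_mul w.re (n : ℝ), le_abs_self w.re,
      abs_nonneg (n : ℝ), abs_nonneg w.re]
  have hsum := summable_main (K := Real.exp (|w.re| / 2)) (k := 0) (σ := |w.re|)
    (fun n => (-1 : ℂ) ^ n * Complex.exp (w * ((n : ℂ) + 1 / 2)))
    (fun n => (n : ℝ) ^ 2 + (1 - 2 * y) * n) hc (quad_lb _ hb)
  have key := tendsto_tsum_exp _ _ (quad_nonneg _ hb) hsum
  have hval : (∑' n : ℤ, if (n : ℝ) ^ 2 + (1 - 2 * y) * n = 0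
      then ((-1 : ℂ) ^ n * Complex.exp (w * ((n : ℂ) + 1 / 2))) else 0)
      = Complex.exp (w / 2) := by
    rw [tsum_eq_sum (s := ({0} : Finset ℤ))]
    · norm_num
      ring_nf
    · intro n hn
      simp only [Finset.mem_singleton] at hn
      rw [if_neg]
      rcases lt_trichotomy n 0 with h | h | h
      · have hn1 : (n : ℝ) ≤ -1 := by exact_mod_cast Int.le_sub_one_of_lt h
        have h2 : (n : ℝ) < 0 := by linarith
        have h3 : (n : ℝ) + 1 - 2 * y < 0 := by linarith
        nlinarith [mul_pos_of_neg_of_neg h2 h3]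
      · exact absurd h hn
      · have hn1 : (1 : ℝ) ≤ (n : ℝ) := by exact_mod_cast h
        have h3 : (0 : ℝ) < (n : ℝ) + 1 - 2 * y := by linarith
        nlinarith [mul_pos (by linarith : (0:ℝ) < (n:ℝ)) h3]
  rw [hval] at key
  refine key.congr fun τ => ?_
  rw [jTheta, ← tsum_mul_left]
  refine tsum_congr fun n => ?_
  simp only [neg_one_zpow]
  rw [show Complex.exp ((n : ℂ) * ((π : ℂ) * I)) * Complex.exp ((π : ℂ) * I * τ * ((n : ℂ) + 1 / 2) ^ 2)
        * Complex.exp ((w - 2 * (π : ℂ) * I * (y : ℂ) * τ) * ((n : ℂ) + 1 / 2))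
      = Complex.exp ((n : ℂ) * ((π : ℂ) * I) + (π : ℂ) * I * τ * ((n : ℂ) + 1 / 2) ^ 2
        + (w - 2 * (π : ℂ) * I * (y : ℂ) * τ) * ((n : ℂ) + 1 / 2)) by
      rw [Complex.exp_add, Complex.exp_add]]
  rw [show (Complex.exp ((n : ℂ) * ((π : ℂ) * I)) * Complex.exp (w * ((n : ℂ) + 1 / 2)))
        * Complex.exp ((π : ℂ) * I * ((((n : ℝ) ^ 2 + (1 - 2 * y) * n : ℝ)) : ℂ) * (τ : ℂ))
      = Complex.exp ((n : ℂ) * ((π : ℂ) * I) + w * ((n : ℂ) + 1 / 2)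
        + (π : ℂ) * I * ((((n : ℝ) ^ 2 + (1 - 2 * y) * n : ℝ)) : ℂ) * (τ : ℂ)) by
      rw [Complex.exp_add, Complex.exp_add]]
  rw [← Complex.exp_add]
  congr 1
  push_cast
  ring

/-- For `0 < y < 1`, `x₀ ∈ ℝ`, and `x, z ∈ ℂ` with `e^x ≠ 1`, the function
`τ ↦ e^{−yx} F(x, z − x₀ − yτ, τ)` tends to `2πi e^{−yx} (1/(e^x − 1) + 1)` as `Im τ → ∞`. -/
theorem jacobiF_shifted_tendsto_atImInfty (y : ℝ) (hy0 : 0 < y) (hy1 : y < 1) (x₀ : ℝ)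
    (x z : ℂ) (hx : Complex.exp x ≠ 1) :
    Tendsto (fun τ : UpperHalfPlane =>
        Complex.exp (-(y : ℂ) * x) * jacobiF x (z - (x₀ : ℂ) - (y : ℂ) * (τ : ℂ)) τ)
      UpperHalfPlane.atImInfty
      (nhds (2 * Real.pi * I * Complex.exp (-(y : ℂ) * x) *
        (1 / (Complex.exp x - 1) + 1))) := by
  have hu : Complex.exp (x / 2) ≠ 0 := Complex.exp_ne_zero _
  have hx2 : Complex.exp x = Complex.exp (x / 2) * Complex.exp (x / 2) := by
    rw [← Complex.exp_add]
    norm_num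
  have hne : Complex.exp (x / 2) - Complex.exp (-x / 2) ≠ 0 := by
    intro h
    apply hx
    have h1 : Complex.exp (x / 2) = Complex.exp (-x / 2) := by
      linear_combination h
    calc Complex.exp x = Complex.exp (x / 2) * Complex.exp (x / 2) := hx2
      _ = Complex.exp (-x / 2) * Complex.exp (x / 2) := by nth_rewrite 1 [h1]; rfl
      _ = 1 := by
          rw [← Complex.exp_add, show (-x / 2 + x / 2 : ℂ) = 0 by ring, Complex.exp_zero]
  have hden : (Complex.exp (x / 2) - Complex.exp (-x / 2)) *
      Complex.exp ((2 * (Real.pi : ℂ) * I * (z - (x₀ : ℂ))) / 2) ≠ 0 :=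
    mul_ne_zero hne (Complex.exp_ne_zero _)
  have key : Tendsto (fun τ : UpperHalfPlane =>
      Complex.exp (-(y : ℂ) * x) * (2 * (Real.pi : ℂ) * I *
        ((Complex.exp (-((Real.pi : ℂ) * I * τ / 4)) * deriv (fun w => jTheta w τ) 0) *
          (Complex.exp (-((Real.pi : ℂ) * I * (1 / 4 - (y : ℂ)) * τ)) *
            jTheta ((x + 2 * (Real.pi : ℂ) * I * (z - (x₀ : ℂ))) -
              2 * (Real.pi : ℂ) * I * (y : ℂ) * τ) τ)) /
        ((Complex.exp (-((Real.pi : ℂ) * I * τ / 4)) * jTheta x τ) *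
          (Complex.exp (-((Real.pi : ℂ) * I * (1 / 4 - (y : ℂ)) * τ)) *
            jTheta ((2 * (Real.pi : ℂ) * I * (z - (x₀ : ℂ))) -
              2 * (Real.pi : ℂ) * I * (y : ℂ) * τ) τ))))
      UpperHalfPlane.atImInfty
      (nhds (Complex.exp (-(y : ℂ) * x) * (2 * (Real.pi : ℂ) * I *
        (1 * Complex.exp ((x + 2 * (Real.pi : ℂ) * I * (z - (x₀ : ℂ))) / 2)) /
        ((Complex.exp (x / 2) - Complex.exp (-x / 2)) *
          Complex.exp ((2 * (Real.pi : ℂ) * I * (z - (x₀ : ℂ))) / 2))))) :=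
    tendsto_const_nhds.mul ((tendsto_const_nhds.mul
      (tendstoA.mul (tendstoD y hy0 hy1 (x + 2 * (Real.pi : ℂ) * I * (z - (x₀ : ℂ)))))).div
      ((tendstoB x).mul (tendstoD y hy0 hy1 (2 * (Real.pi : ℂ) * I * (z - (x₀ : ℂ))))) hden)
  have hval : Complex.exp (-(y : ℂ) * x) * (2 * (Real.pi : ℂ) * I *
      (1 * Complex.exp ((x + 2 * (Real.pi : ℂ) * I * (z - (x₀ : ℂ))) / 2)) /
      ((Complex.exp (x / 2) - Complex.exp (-x / 2)) *
        Complex.exp ((2 * (Real.pi : ℂ) * I * (z - (x₀ : ℂ))) / 2)))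
      = 2 * Real.pi * I * Complex.exp (-(y : ℂ) * x) * (1 / (Complex.exp x - 1) + 1) := by
    have hsplit : Complex.exp ((x + 2 * (Real.pi : ℂ) * I * (z - (x₀ : ℂ))) / 2)
        = Complex.exp (x / 2) * Complex.exp ((2 * (Real.pi : ℂ) * I * (z - (x₀ : ℂ))) / 2) := by
      rw [← Complex.exp_add]
      ring_nf
    have hinv : Complex.exp (-x / 2) = (Complex.exp (x / 2))⁻¹ := by
      rw [show (-x / 2 : ℂ) = -(x / 2) by ring, Complex.exp_neg]
    have hx1 : Complex.exp x - 1 ≠ 0 := sub_ne_zero.mpr hx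
    rw [hx2] at hx1
    rw [hinv] at hne
    have hv : Complex.exp ((2 * (Real.pi : ℂ) * I * (z - (x₀ : ℂ))) / 2) ≠ 0 :=
      Complex.exp_ne_zero _
    rw [hsplit, hinv, hx2, div_add_one hx1]
    field_simp
    ring
  rw [hval] at key
  refine key.congr fun τ => ?_
  rw [jacobiF]
  rw [show (2 * (Real.pi : ℂ) * I * (z - (x₀ : ℂ) - (y : ℂ) * (τ : ℂ)))
      = (2 * (Real.pi : ℂ) * I * (z - (x₀ : ℂ))) - 2 * (Real.pi : ℂ) * I * (y : ℂ) * (τ : ℂ)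
      from by ring]
  rw [show (x + ((2 * (Real.pi : ℂ) * I * (z - (x₀ : ℂ))) -
        2 * (Real.pi : ℂ) * I * (y : ℂ) * (τ : ℂ)))
      = ((x + 2 * (Real.pi : ℂ) * I * (z - (x₀ : ℂ))) -
        2 * (Real.pi : ℂ) * I * (y : ℂ) * (τ : ℂ)) from by ring]
  set e₁ := Complex.exp (-((Real.pi : ℂ) * I * τ / 4)) with he₁
  set e₂ := Complex.exp (-((Real.pi : ℂ) * I * (1 / 4 - (y : ℂ)) * τ)) with he₂
  set d := deriv (fun w => jTheta w τ) 0
  set n₁ := jTheta ((x + 2 * (Real.pi : ℂ) * I * (z - (x₀ : ℂ))) -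
      2 * (Real.pi : ℂ) * I * (y : ℂ) * τ) τ
  set n₂ := jTheta x τ
  set n₃ := jTheta ((2 * (Real.pi : ℂ) * I * (z - (x₀ : ℂ))) -
      2 * (Real.pi : ℂ) * I * (y : ℂ) * τ) τ
  have he12 : e₁ * e₂ ≠ 0 := mul_ne_zero (Complex.exp_ne_zero _) (Complex.exp_ne_zero _)
  rw [show 2 * (Real.pi : ℂ) * I * ((e₁ * d) * (e₂ * n₁)) = (e₁ * e₂) * (2 * (Real.pi : ℂ) * I * d * n₁)
      from by ring,
    show (e₁ * n₂) * (e₂ * n₃) = (e₁ * e₂) * (n₂ * n₃) from by ring,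
    mul_div_mul_left _ _ he12]
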